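/- Let I be an arc of {1,...,n} and let α be a weak endomorphism of the cycle graph C_n whose restriction to I is injective. Then there exists σ in the dihedral group D_{2n} of automorphisms of C_n such that α and σ agree on I. -/
import Mathlib


/-- `α` is a weak endomorphism of the cycle graph `C_n` on `ZMod n`. -/
def IsWeakEndCycle (n : ℕ) (α : ZMod n → ZMod n) : Prop :=
  ∀ i : ZMod n, α (i + 1) - α i ∈ ({0, 1, -1} : Set (ZMod n))

/-- The subset of `ZMod n` corresponding to the interval `[i,j] = {i, i+1, …, j}`
of `{1,…,n}`. -/
def natInterval (n i j : ℕ) : Set (ZMod n) := (fun x : ℕ => (x : ZMod n)) '' Set.Icc i j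

/-- `I` is an arc of `{1,…,n}`: either an interval `[i,j]` with `1 ≤ i ≤ j ≤ n`,
or a wrap-around union `[j,n] ∪ [1,i]` with `1 ≤ i < j - 1 ≤ n - 1`. -/
def IsArc (n : ℕ) (I : Set (ZMod n)) : Prop :=
  (∃ i j : ℕ, 1 ≤ i ∧ i ≤ j ∧ j ≤ n ∧ I = natInterval n i j) ∨
    (∃ i j : ℕ, 1 ≤ i ∧ i + 1 < j ∧ j ≤ n ∧ I = natInterval n j n ∪ natInterval n 1 i)

/-- The dihedral group `D_{2n}` of automorphisms of `C_n`, generated by the rotation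
`i ↦ i + 1` and the reflection `i ↦ 1 - i` (i.e. `i ↦ n - i + 1` mod `n`). -/
def dihedralCycle (n : ℕ) : Subgroup (Equiv.Perm (ZMod n)) :=
  Subgroup.closure {Equiv.addRight (1 : ZMod n), Equiv.subLeft (1 : ZMod n)}

/-- Any translation belongs to the dihedral group. -/
lemma natCast_addRight_mem_dihedral (n k : ℕ) :
    Equiv.addRight ((k : ZMod n)) ∈ dihedralCycle n := by
  induction k with
  | zero =>
      have : Equiv.addRight ((0 : ℕ) : ZMod n) = 1 := by
        ext x; simp
      rw [this]; exact (dihedralCycle n).one_mem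
  | succ k ih =>
      have h1 : Equiv.addRight (1 : ZMod n) ∈ dihedralCycle n :=
        Subgroup.subset_closure (by left; rfl)
      have : Equiv.addRight ((k + 1 : ℕ) : ZMod n) =
          Equiv.addRight ((k : ZMod n)) * Equiv.addRight (1 : ZMod n) := by
        ext x; simp [Equiv.Perm.mul_apply]; push_cast; ring
      rw [this]; exact (dihedralCycle n).mul_mem ih h1

lemma addRight_mem_dihedral (n : ℕ) [NeZero n] (c : ZMod n) :
    Equiv.addRight c ∈ dihedralCycle n := by
  obtain ⟨k, rfl⟩ := ZMod.natCast_rightInverse.surjective c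
  exact natCast_addRight_mem_dihedral n k

lemma subLeft_mem_dihedral (n : ℕ) [NeZero n] (c : ZMod n) :
    Equiv.subLeft c ∈ dihedralCycle n := by
  have h1 : Equiv.subLeft (1 : ZMod n) ∈ dihedralCycle n :=
    Subgroup.subset_closure (by right; rfl)
  have : Equiv.subLeft c =
      Equiv.subLeft (1 : ZMod n) * Equiv.addRight (1 - c) := by
    ext x; simp [Equiv.Perm.mul_apply]; ring
  rw [this]
  exact (dihedralCycle n).mul_mem h1 (addRight_mem_dihedral n _)

lemma cast_inj_of_lt {n t t' : ℕ} (ht : t < n) (ht' : t' < n)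
    (h : (t : ZMod n) = (t' : ZMod n)) : t = t' := by
  have hne : NeZero n := ⟨by omega⟩
  have := congrArg ZMod.val h
  rwa [ZMod.val_cast_of_lt ht, ZMod.val_cast_of_lt ht'] at this

/-- On a run of `k+1` consecutive vertices inside the injectivity set, a weak
endomorphism is an affine map `t ↦ α a + ε t` with `ε = ±1`. -/
lemma key_lemma (n : ℕ) (hn : 3 ≤ n) (α : ZMod n → ZMod n) (hα : IsWeakEndCycle n α)
    (I : Set (ZMod n)) (hinj : Set.InjOn α I) (a k : ℕ) (hk : k < n)
    (hmem : ∀ t : ℕ, t ≤ k → ((a : ZMod n) + (t : ZMod n)) ∈ I) :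
    ∃ ε : ZMod n, (ε = 1 ∨ ε = -1) ∧
      ∀ t : ℕ, t ≤ k → α ((a : ZMod n) + (t : ZMod n)) = α (a : ZMod n) + ε * t := by
  have hcancel : ∀ t t' : ℕ, t ≤ k → t' ≤ k →
      ((a : ZMod n) + (t : ZMod n)) = ((a : ZMod n) + (t' : ZMod n)) → t = t' := by
    intro t t' ht ht' h
    exact cast_inj_of_lt (lt_of_le_of_lt ht hk) (lt_of_le_of_lt ht' hk)
      (by exact add_left_cancel h)
  have hinj' : ∀ t t' : ℕ, t ≤ k → t' ≤ k →
      α ((a : ZMod n) + (t : ZMod n)) = α ((a : ZMod n) + (t' : ZMod n)) → t = t' := by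
    intro t t' ht ht' h
    exact hcancel t t' ht ht' (hinj (hmem t ht) (hmem t' ht') h)
  rcases Nat.eq_zero_or_pos k with hk0 | hk1
  · refine ⟨1, Or.inl rfl, ?_⟩
    intro t ht
    have : t = 0 := by omega
    subst this; subst hk0; simp
  · -- the step from a to a+1
    set ε := α ((a : ZMod n) + (1 : ZMod n)) - α (a : ZMod n) with hε
    have hstep : ∀ t : ℕ, α ((a : ZMod n) + (t : ZMod n) + 1) - α ((a : ZMod n) + (t : ZMod n))
        ∈ ({0, 1, -1} : Set (ZMod n)) := fun t => hα _
    have hεmem : ε ∈ ({0, 1, -1} : Set (ZMod n)) := by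
      have := hstep 0
      simpa [hε] using this
    have hεne : ε ≠ 0 := by
      intro h0
      have : α ((a : ZMod n) + (1 : ZMod n)) = α ((a : ZMod n) + ((0 : ℕ) : ZMod n)) := by
        have := sub_eq_zero.mp (by rw [← hε]; exact h0)
        simpa using this
      have : (1 : ℕ) = 0 := hinj' 1 0 hk1 (Nat.zero_le _)
        (by simpa using this)
      omega
    have hεcases : ε = 1 ∨ ε = -1 := by
      rcases hεmem with h | h | h
      · exact absurd h hεne
      · exact Or.inl h
      · exact Or.inr h
    have h2 : (2 : ZMod n) ≠ 0 := by
      intro h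
      have : ((2 : ℕ) : ZMod n) = 0 := by exact_mod_cast h
      have := (ZMod.natCast_eq_zero_iff 2 n).mp this
      have := Nat.le_of_dvd (by omega) this
      omega
    have h2ε : ε ≠ -ε := by
      intro h
      have : (2 : ZMod n) * ε = 0 := by linear_combination h
      rcases hεcases with h' | h' <;> simp [h'] at this <;>
        first
          | exact h2 this
          | exact h2 (by linear_combination -this)
    refine ⟨ε, hεcases, ?_⟩
    intro t
    induction t using Nat.strong_induction_on with
    | _ t IH =>
      intro ht
      match t, ht with
      | 0, _ => simp
      | 1, ht => push_cast; rw [hε]; ring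
      | (s+2), ht =>
        have hs1 : s + 1 ≤ k := by omega
        have hs : s ≤ k := by omega
        have hIH1 : α ((a : ZMod n) + ((s+1 : ℕ) : ZMod n)) = α (a : ZMod n) + ε * (s+1 : ℕ) :=
          IH (s+1) (by omega) hs1
        have hIH0 : α ((a : ZMod n) + ((s : ℕ) : ZMod n)) = α (a : ZMod n) + ε * (s : ℕ) :=
          IH s (by omega) hs
        have hd := hstep (s+1)
        set d := α ((a : ZMod n) + ((s+1 : ℕ) : ZMod n) + 1) -
          α ((a : ZMod n) + ((s+1 : ℕ) : ZMod n)) with hddef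
        have hrw : (a : ZMod n) + ((s+2 : ℕ) : ZMod n) = (a : ZMod n) + ((s+1 : ℕ) : ZMod n) + 1 := by
          push_cast; ring
        have hdne : d ≠ 0 := by
          intro h0
          have heq : α ((a : ZMod n) + ((s+2 : ℕ) : ZMod n)) =
              α ((a : ZMod n) + ((s+1 : ℕ) : ZMod n)) := by
            rw [hrw]; exact sub_eq_zero.mp h0
          have := hinj' (s+2) (s+1) ht hs1 heq
          omega
        have hdcases : d = ε ∨ d = -ε := by
          rcases hd with h | h | h
          · exact absurd h hdne
          · rcases hεcases with h' | h'
            · exact Or.inl (by rw [h, h'])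
            · exact Or.inr (by rw [h, h']; ring)
          · rcases hεcases with h' | h'
            · exact Or.inr (by rw [h, h'])
            · exact Or.inl (by rw [h, h'])
        rcases hdcases with h | h
        · have : α ((a : ZMod n) + ((s+2 : ℕ) : ZMod n)) =
              α ((a : ZMod n) + ((s+1 : ℕ) : ZMod n)) + ε := by
            rw [hrw]; linear_combination h
          rw [this, hIH1]; push_cast; ring
        · exfalso
          have heq : α ((a : ZMod n) + ((s+2 : ℕ) : ZMod n)) =
              α ((a : ZMod n) + ((s : ℕ) : ZMod n)) := by
            rw [hrw]
            have : α ((a : ZMod n) + ((s+1 : ℕ) : ZMod n) + 1) =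
                α ((a : ZMod n) + ((s+1 : ℕ) : ZMod n)) - ε := by linear_combination h
            rw [this, hIH1, hIH0]; push_cast; ring
          have := hinj' (s+2) s ht hs heq
          omega

/-- If a weak endomorphism `α` of `C_n` is injective on an arc `I`, then `α` agrees on
`I` with some element `σ` of the dihedral group `D_{2n}`. -/
theorem injOn_arc_eq_dihedral_on_arc (n : ℕ) (hn : 3 ≤ n) (I : Set (ZMod n))
    (hI : IsArc n I) (α : ZMod n → ZMod n) (hα : IsWeakEndCycle n α)
    (hinj : Set.InjOn α I) :
    ∃ σ ∈ dihedralCycle n, Set.EqOn α (⇑σ) I := by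
  have hne : NeZero n := ⟨by omega⟩
  -- reduce both arc shapes to a run `a, a+1, …, a+k` with `k < n`
  obtain ⟨a, k, hk, hmem, hsurj⟩ :
      ∃ a k : ℕ, k < n ∧ (∀ t : ℕ, t ≤ k → ((a : ZMod n) + (t : ZMod n)) ∈ I) ∧
        (∀ x ∈ I, ∃ t : ℕ, t ≤ k ∧ x = (a : ZMod n) + (t : ZMod n)) := by
    rcases hI with ⟨i, j, hi1, hij, hjn, hIeq⟩ | ⟨i, j, hi1, hij, hjn, hIeq⟩
    · refine ⟨i, j - i, by omega, ?_, ?_⟩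
      · intro t ht
        rw [hIeq]
        exact ⟨i + t, by constructor <;> omega, by push_cast; ring⟩
      · intro x hx
        rw [hIeq] at hx
        obtain ⟨m, hm, rfl⟩ := hx
        simp only [Set.mem_Icc] at hm
        refine ⟨m - i, by omega, ?_⟩
        have h1 : (i : ZMod n) + ((m - i : ℕ) : ZMod n) = ((i + (m - i) : ℕ) : ZMod n) := by
          push_cast; ring
        rw [h1]
        congr 1
        omega
    · refine ⟨j, n + i - j, by omega, ?_, ?_⟩
      · intro t ht
        rw [hIeq]
        rcases le_or_gt (j + t) n with h | h
        · left
          exact ⟨j + t, by constructor <;> omega, by push_cast; ring⟩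
        · right
          refine ⟨j + t - n, by constructor <;> omega, ?_⟩
          show ((j + t - n : ℕ) : ZMod n) = (j : ZMod n) + (t : ZMod n)
          have h1 : ((j + t - n : ℕ) : ZMod n) = ((j + t : ℕ) : ZMod n) - ((n : ℕ) : ZMod n) := by
            rw [← Nat.cast_sub (by omega)]
          rw [h1, ZMod.natCast_self]
          push_cast; ring
      · intro x hx
        rw [hIeq] at hx
        rcases hx with ⟨m, hm, rfl⟩ | ⟨m, hm, rfl⟩
        · simp only [Set.mem_Icc] at hm
          refine ⟨m - j, by omega, ?_⟩
          show (m : ZMod n) = (j : ZMod n) + ((m - j : ℕ) : ZMod n)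
          rw [← Nat.cast_add]
          congr 1
          omega
        · simp only [Set.mem_Icc] at hm
          refine ⟨n + m - j, by omega, ?_⟩
          show (m : ZMod n) = (j : ZMod n) + ((n + m - j : ℕ) : ZMod n)
          rw [← Nat.cast_add]
          have h1 : j + (n + m - j) = n + m := by omega
          rw [h1]
          push_cast [ZMod.natCast_self]
          ring
  obtain ⟨ε, hεcases, hform⟩ := key_lemma n hn α hα I hinj a k hk hmem
  rcases hεcases with hε | hε
  · refine ⟨Equiv.addRight (α (a : ZMod n) - (a : ZMod n)),
      addRight_mem_dihedral n _, ?_⟩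
    intro x hx
    obtain ⟨t, ht, rfl⟩ := hsurj x hx
    have := hform t ht
    simp only [Equiv.coe_addRight]
    rw [this, hε]
    ring
  · refine ⟨Equiv.subLeft (α (a : ZMod n) + (a : ZMod n)),
      subLeft_mem_dihedral n _, ?_⟩
    intro x hx
    obtain ⟨t, ht, rfl⟩ := hsurj x hx
    have := hform t ht
    simp only [Equiv.subLeft_apply]
    rw [this, hε]
    ring
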